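/- Let Δ₆^{Bℓ} ⊂ ℝ² be the convex hull of (0,0), (6,0), (6,2), (5,4), (9/2,9/2) and let P₆(x,y) = 4·x⁵·y⁵·(x+y)²·(x−y)². Then (∫_{Δ₆^{Bℓ}} x·P₆ dxdy)/(∫_{Δ₆^{Bℓ}} P₆ dxdy) = 5817870364882097045/1125028875118233728 and (∫_{Δ₆^{Bℓ}} y·P₆ dxdy)/(∫_{Δ₆^{Bℓ}} P₆ dxdy) = 15784597990157403671/5625144375591168640; in particular the sum of these two quantities is strictly less than 8. -/

import Mathlib

open MeasureTheory

noncomputable def gfun (x : ℝ) : ℝ := min x (min (9 - x) (14 - 2*x))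

def Sset : Set (ℝ × ℝ) := {p | 0 ≤ p.2 ∧ p.2 ≤ p.1 ∧ p.1 + p.2 ≤ 9 ∧ 2*p.1 + p.2 ≤ 14 ∧ p.1 ≤ 6}

@[fun_prop] lemma gfun_cont : Continuous gfun := by unfold gfun; fun_prop

lemma gfun_eq1 {x : ℝ} (h : x ≤ 9/2) : gfun x = x := by
  unfold gfun; exact min_eq_left (le_min (by linarith) (by linarith))

lemma gfun_eq2 {x : ℝ} (h1 : 9/2 ≤ x) (h2 : x ≤ 5) : gfun x = 9 - x := by
  unfold gfun
  rw [min_eq_left (by linarith : (9:ℝ) - x ≤ 14 - 2*x), min_eq_right (by linarith)]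

lemma gfun_eq3 {x : ℝ} (h : 5 ≤ x) : gfun x = 14 - 2*x := by
  unfold gfun
  rw [min_eq_right (by linarith : (14:ℝ) - 2*x ≤ 9 - x), min_eq_right (by linarith)]

lemma Sset_closed : IsClosed Sset := by
  have : Sset = {p : ℝ×ℝ | 0 ≤ p.2} ∩ ({p | p.2 ≤ p.1} ∩ ({p | p.1 + p.2 ≤ 9} ∩ ({p | 2*p.1 + p.2 ≤ 14} ∩ {p | p.1 ≤ 6}))) := by
    ext p; simp [Sset, and_assoc]
  rw [this]
  exact (isClosed_le (by fun_prop) (by fun_prop)).inter ((isClosed_le (by fun_prop) (by fun_prop)).inter ((isClosed_le (by fun_prop) (by fun_prop)).inter ((isClosed_le (by fun_prop) (by fun_prop)).inter (isClosed_le (by fun_prop) (by fun_prop)))))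

lemma Sset_compact : IsCompact Sset := by
  refine IsCompact.of_isClosed_subset (isCompact_Icc (a := ((0:ℝ),(0:ℝ))) (b := (6,6))) Sset_closed ?_
  rintro ⟨x,y⟩ ⟨h1,h2,h3,h4,h5⟩; simp only [Set.mem_Icc, Prod.le_def]
  exact ⟨⟨by linarith, h1⟩, h5, by linarith⟩

lemma slice_mem {x y : ℝ} (hx : x ∈ Set.Icc (0:ℝ) 6) : ((x,y) ∈ Sset) ↔ y ∈ Set.Icc (0:ℝ) (gfun x) := by
  obtain ⟨hx0, hx6⟩ := hx
  simp only [Sset, Set.mem_setOf_eq, Set.mem_Icc, gfun, le_min_iff]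
  constructor
  · rintro ⟨h1,h2,h3,h4,h5⟩; exact ⟨h1, h2, by linarith, by linarith⟩
  · rintro ⟨h1,h2,h3,h4⟩; exact ⟨h1, h2, by linarith, by linarith, hx6⟩

lemma slice_not_mem {x y : ℝ} (hx : x ∉ Set.Icc (0:ℝ) 6) : (x,y) ∉ Sset := by
  simp only [Set.mem_Icc, not_and_or, not_le] at hx
  rintro ⟨h1,h2,h3,h4,h5⟩
  rcases hx with h|h <;> linarith

lemma gfun_nonneg {x : ℝ} (hx : x ∈ Set.Icc (0:ℝ) 6) : 0 ≤ gfun x :=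
  le_min hx.1 (le_min (by linarith [hx.2]) (by linarith [hx.2]))

lemma key (F : ℝ × ℝ → ℝ) (hF : Continuous F) (h : ℝ → ℝ) (hh : Continuous h)
    (hinner : ∀ x : ℝ, (∫ y in (0:ℝ)..(gfun x), F (x, y)) = h x) :
    (∫ p in Sset, F p) =
      (∫ x in (0:ℝ)..(9/2), h x) + ((∫ x in (9/2:ℝ)..5, h x) + ∫ x in (5:ℝ)..6, h x) := by
  have hSmeas := Sset_closed.measurableSet
  have hInt : IntegrableOn F Sset := hF.continuousOn.integrableOn_compact Sset_compact
  rw [← integral_indicator hSmeas]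
  rw [Measure.volume_eq_prod]
  rw [integral_prod _ (by rw [← Measure.volume_eq_prod]; exact hInt.integrable_indicator hSmeas)]
  have hx : ∀ x : ℝ, (∫ y, Sset.indicator F (x, y)) = (Set.Icc (0:ℝ) 6).indicator h x := by
    intro x
    by_cases hx6 : x ∈ Set.Icc (0:ℝ) 6
    · rw [Set.indicator_of_mem hx6]
      have : (fun y => Sset.indicator F (x, y)) = (Set.Icc (0:ℝ) (gfun x)).indicator (fun y => F (x,y)) := by
        funext y
        by_cases hy : y ∈ Set.Icc (0:ℝ) (gfun x)
        · rw [Set.indicator_of_mem hy, Set.indicator_of_mem ((slice_mem hx6).2 hy)]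
        · rw [Set.indicator_of_notMem hy, Set.indicator_of_notMem (fun hc => hy ((slice_mem hx6).1 hc))]
      rw [this, integral_indicator measurableSet_Icc, integral_Icc_eq_integral_Ioc,
        ← intervalIntegral.integral_of_le (gfun_nonneg hx6)]
      exact hinner x
    · rw [Set.indicator_of_notMem hx6]
      have : (fun y => Sset.indicator F (x, y)) = fun _ => 0 := by
        funext y; exact Set.indicator_of_notMem (slice_not_mem hx6) F
      rw [this, integral_zero]
  simp only [hx]
  rw [integral_indicator measurableSet_Icc, integral_Icc_eq_integral_Ioc,
    ← intervalIntegral.integral_of_le (by norm_num : (0:ℝ) ≤ 6)]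
  rw [← intervalIntegral.integral_add_adjacent_intervals (a := (0:ℝ)) (b := 9/2) (c := 6)
    (hh.intervalIntegrable _ _) (hh.intervalIntegrable _ _),
    ← intervalIntegral.integral_add_adjacent_intervals (a := (9/2:ℝ)) (b := 5) (c := 6)
    (hh.intervalIntegrable _ _) (hh.intervalIntegrable _ _)]

lemma inner0 (x c : ℝ) : (∫ y in (0:ℝ)..c, 4*x^5*y^5*(x+y)^2*(x-y)^2)
    = 2/3*x^9*c^6 - x^7*c^8 + 2/5*x^5*c^10 := by
  have hW : ∀ y ∈ Set.uIcc (0:ℝ) c, HasDerivAt (fun y : ℝ => 2/3*x^9*y^6 - x^7*y^8 + 2/5*x^5*y^10)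
      (4*x^5*y^5*(x+y)^2*(x-y)^2) y := by
    intro y _
    refine ((((hasDerivAt_pow 6 y).const_mul (2/3*x^9)).sub ((hasDerivAt_pow 8 y).const_mul (x^7))).add
      ((hasDerivAt_pow 10 y).const_mul (2/5*x^5))).congr_deriv ?_
    norm_num; ring
  rw [intervalIntegral.integral_eq_sub_of_hasDerivAt hW
    ((by fun_prop : Continuous fun y : ℝ => 4*x^5*y^5*(x+y)^2*(x-y)^2).intervalIntegrable _ _)]
  norm_num

lemma inner1 (x c : ℝ) : (∫ y in (0:ℝ)..c, x * (4*x^5*y^5*(x+y)^2*(x-y)^2))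
    = 2/3*x^10*c^6 - x^8*c^8 + 2/5*x^6*c^10 := by
  have hW : ∀ y ∈ Set.uIcc (0:ℝ) c, HasDerivAt (fun y : ℝ => 2/3*x^10*y^6 - x^8*y^8 + 2/5*x^6*y^10)
      (x * (4*x^5*y^5*(x+y)^2*(x-y)^2)) y := by
    intro y _
    refine ((((hasDerivAt_pow 6 y).const_mul (2/3*x^10)).sub ((hasDerivAt_pow 8 y).const_mul (x^8))).add
      ((hasDerivAt_pow 10 y).const_mul (2/5*x^6))).congr_deriv ?_
    norm_num; ring
  rw [intervalIntegral.integral_eq_sub_of_hasDerivAt hW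
    ((by fun_prop : Continuous fun y : ℝ => x * (4*x^5*y^5*(x+y)^2*(x-y)^2)).intervalIntegrable _ _)]
  norm_num

lemma inner2 (x c : ℝ) : (∫ y in (0:ℝ)..c, y * (4*x^5*y^5*(x+y)^2*(x-y)^2))
    = 4/7*x^9*c^7 - 8/9*x^7*c^9 + 4/11*x^5*c^11 := by
  have hW : ∀ y ∈ Set.uIcc (0:ℝ) c, HasDerivAt (fun y : ℝ => 4/7*x^9*y^7 - 8/9*x^7*y^9 + 4/11*x^5*y^11)
      (y * (4*x^5*y^5*(x+y)^2*(x-y)^2)) y := by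
    intro y _
    refine ((((hasDerivAt_pow 7 y).const_mul (4/7*x^9)).sub ((hasDerivAt_pow 9 y).const_mul (8/9*x^7))).add
      ((hasDerivAt_pow 11 y).const_mul (4/11*x^5))).congr_deriv ?_
    norm_num; ring
  rw [intervalIntegral.integral_eq_sub_of_hasDerivAt hW
    ((by fun_prop : Continuous fun y : ℝ => y * (4*x^5*y^5*(x+y)^2*(x-y)^2)).intervalIntegrable _ _)]
  norm_num

lemma piece0a : (∫ x in (0:ℝ)..((9:ℝ)/2), 2/3*x^9*(x)^6 - x^7*(x)^8 + 2/5*x^5*(x)^10) = ((617673396283947:ℝ)/5242880) := by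
  have hW : ∀ x ∈ Set.uIcc (0:ℝ) ((9:ℝ)/2), HasDerivAt (fun x : ℝ => ((1:ℝ)/240) * x ^ 16)
      (2/3*x^9*(x)^6 - x^7*(x)^8 + 2/5*x^5*(x)^10) x := by
    intro x _
    refine ((hasDerivAt_pow 16 x).const_mul ((1:ℝ)/240)).congr_deriv ?_
    norm_num; ring
  rw [intervalIntegral.integral_eq_sub_of_hasDerivAt hW ((by fun_prop : Continuous fun x : ℝ => 2/3*x^9*(x)^6 - x^7*(x)^8 + 2/5*x^5*(x)^10).intervalIntegrable _ _)]
  norm_num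

lemma piece0b : (∫ x in ((9:ℝ)/2)..(5:ℝ), 2/3*x^9*((9 - x))^6 - x^7*((9 - x))^8 + 2/5*x^5*((9 - x))^10) = ((7212807339381430679:ℝ)/15744368640) := by
  have hW : ∀ x ∈ Set.uIcc ((9:ℝ)/2) (5:ℝ), HasDerivAt (fun x : ℝ => ((1162261467:ℝ)/5) * x ^ 6 + ((-1549681956:ℝ)/7) * x ^ 7 + ((731794257:ℝ)/8) * x ^ 8 + ((-21257640:ℝ)/1) * x ^ 9 + ((3011499:ℝ)/1) * x ^ 10 + ((-14407956:ℝ)/55) * x ^ 11 + ((13122:ℝ)/1) * x ^ 12 + ((-3888:ℝ)/13) * x ^ 13 + ((1:ℝ)/240) * x ^ 16)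
      (2/3*x^9*((9 - x))^6 - x^7*((9 - x))^8 + 2/5*x^5*((9 - x))^10) x := by
    intro x _
    refine ((((((((((hasDerivAt_pow 6 x).const_mul ((1162261467:ℝ)/5)).add ((hasDerivAt_pow 7 x).const_mul ((-1549681956:ℝ)/7))).add ((hasDerivAt_pow 8 x).const_mul ((731794257:ℝ)/8))).add ((hasDerivAt_pow 9 x).const_mul ((-21257640:ℝ)/1))).add ((hasDerivAt_pow 10 x).const_mul ((3011499:ℝ)/1))).add ((hasDerivAt_pow 11 x).const_mul ((-14407956:ℝ)/55))).add ((hasDerivAt_pow 12 x).const_mul ((13122:ℝ)/1))).add ((hasDerivAt_pow 13 x).const_mul ((-3888:ℝ)/13))).add ((hasDerivAt_pow 16 x).const_mul ((1:ℝ)/240))).congr_deriv ?_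
    norm_num; ring
  rw [intervalIntegral.integral_eq_sub_of_hasDerivAt hW ((by fun_prop : Continuous fun x : ℝ => 2/3*x^9*((9 - x))^6 - x^7*((9 - x))^8 + 2/5*x^5*((9 - x))^10).intervalIntegrable _ _)]
  norm_num

lemma piece0c : (∫ x in (5:ℝ)..(6:ℝ), 2/3*x^9*((14 - 2*x))^6 - x^7*((14 - 2*x))^8 + 2/5*x^5*((14 - 2*x))^10) = ((1566887306056:ℝ)/1287) := by
  have hW : ∀ x ∈ Set.uIcc (5:ℝ) (6:ℝ), HasDerivAt (fun x : ℝ => ((289254654976:ℝ)/15) * x ^ 6 + ((-23612624896:ℝ)/1) * x ^ 7 + ((13097627872:ℝ)/1) * x ^ 8 + ((-38792169472:ℝ)/9) * x ^ 9 + ((13922112064:ℝ)/15) * x ^ 10 + ((-7490812672:ℝ)/55) * x ^ 11 + ((13752928:ℝ)/1) * x ^ 12 + ((-36703744:ℝ)/39) * x ^ 13 + ((41664:ℝ)/1) * x ^ 14 + ((-5376:ℝ)/5) * x ^ 15 + ((184:ℝ)/15) * x ^ 16)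
      (2/3*x^9*((14 - 2*x))^6 - x^7*((14 - 2*x))^8 + 2/5*x^5*((14 - 2*x))^10) x := by
    intro x _
    refine ((((((((((((hasDerivAt_pow 6 x).const_mul ((289254654976:ℝ)/15)).add ((hasDerivAt_pow 7 x).const_mul ((-23612624896:ℝ)/1))).add ((hasDerivAt_pow 8 x).const_mul ((13097627872:ℝ)/1))).add ((hasDerivAt_pow 9 x).const_mul ((-38792169472:ℝ)/9))).add ((hasDerivAt_pow 10 x).const_mul ((13922112064:ℝ)/15))).add ((hasDerivAt_pow 11 x).const_mul ((-7490812672:ℝ)/55))).add ((hasDerivAt_pow 12 x).const_mul ((13752928:ℝ)/1))).add ((hasDerivAt_pow 13 x).const_mul ((-36703744:ℝ)/39))).add ((hasDerivAt_pow 14 x).const_mul ((41664:ℝ)/1))).add ((hasDerivAt_pow 15 x).const_mul ((-5376:ℝ)/5))).add ((hasDerivAt_pow 16 x).const_mul ((184:ℝ)/15))).congr_deriv ?_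
    norm_num; ring
  rw [intervalIntegral.integral_eq_sub_of_hasDerivAt hW ((by fun_prop : Continuous fun x : ℝ => 2/3*x^9*((14 - 2*x))^6 - x^7*((14 - 2*x))^8 + 2/5*x^5*((14 - 2*x))^10).intervalIntegrable _ _)]
  norm_num

lemma piece1a : (∫ x in (0:ℝ)..((9:ℝ)/2), 2/3*x^10*(x)^6 - x^8*(x)^8 + 2/5*x^6*(x)^10) = ((5559060566555523:ℝ)/11141120) := by
  have hW : ∀ x ∈ Set.uIcc (0:ℝ) ((9:ℝ)/2), HasDerivAt (fun x : ℝ => ((1:ℝ)/255) * x ^ 17)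
      (2/3*x^10*(x)^6 - x^8*(x)^8 + 2/5*x^6*(x)^10) x := by
    intro x _
    refine ((hasDerivAt_pow 17 x).const_mul ((1:ℝ)/255)).congr_deriv ?_
    norm_num; ring
  rw [intervalIntegral.integral_eq_sub_of_hasDerivAt hW ((by fun_prop : Continuous fun x : ℝ => 2/3*x^10*(x)^6 - x^8*(x)^8 + 2/5*x^6*(x)^10).intervalIntegrable _ _)]
  norm_num

lemma piece1b : (∫ x in ((9:ℝ)/2)..(5:ℝ), 2/3*x^10*((9 - x))^6 - x^8*((9 - x))^8 + 2/5*x^6*((9 - x))^10) = ((73585761407187974831:ℝ)/33456783360) := by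
  have hW : ∀ x ∈ Set.uIcc ((9:ℝ)/2) (5:ℝ), HasDerivAt (fun x : ℝ => ((6973568802:ℝ)/35) * x ^ 7 + ((-387420489:ℝ)/2) * x ^ 8 + ((81310473:ℝ)/1) * x ^ 9 + ((-19131876:ℝ)/1) * x ^ 10 + ((30114990:ℝ)/11) * x ^ 11 + ((-1200663:ℝ)/5) * x ^ 12 + ((157464:ℝ)/13) * x ^ 13 + ((-1944:ℝ)/7) * x ^ 14 + ((1:ℝ)/255) * x ^ 17)
      (2/3*x^10*((9 - x))^6 - x^8*((9 - x))^8 + 2/5*x^6*((9 - x))^10) x := by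
    intro x _
    refine ((((((((((hasDerivAt_pow 7 x).const_mul ((6973568802:ℝ)/35)).add ((hasDerivAt_pow 8 x).const_mul ((-387420489:ℝ)/2))).add ((hasDerivAt_pow 9 x).const_mul ((81310473:ℝ)/1))).add ((hasDerivAt_pow 10 x).const_mul ((-19131876:ℝ)/1))).add ((hasDerivAt_pow 11 x).const_mul ((30114990:ℝ)/11))).add ((hasDerivAt_pow 12 x).const_mul ((-1200663:ℝ)/5))).add ((hasDerivAt_pow 13 x).const_mul ((157464:ℝ)/13))).add ((hasDerivAt_pow 14 x).const_mul ((-1944:ℝ)/7))).add ((hasDerivAt_pow 17 x).const_mul ((1:ℝ)/255))).congr_deriv ?_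
    norm_num; ring
  rw [intervalIntegral.integral_eq_sub_of_hasDerivAt hW ((by fun_prop : Continuous fun x : ℝ => 2/3*x^10*((9 - x))^6 - x^8*((9 - x))^8 + 2/5*x^6*((9 - x))^10).intervalIntegrable _ _)]
  norm_num

lemma piece1c : (∫ x in (5:ℝ)..(6:ℝ), 2/3*x^10*((14 - 2*x))^6 - x^8*((14 - 2*x))^8 + 2/5*x^6*((14 - 2*x))^10) = ((143873028894800:ℝ)/21879) := by
  have hW : ∀ x ∈ Set.uIcc (5:ℝ) (6:ℝ), HasDerivAt (fun x : ℝ => ((82644187136:ℝ)/5) * x ^ 7 + ((-20661046784:ℝ)/1) * x ^ 8 + ((104781022976:ℝ)/9) * x ^ 9 + ((-19396084736:ℝ)/5) * x ^ 10 + ((27844224128:ℝ)/33) * x ^ 11 + ((-1872703168:ℝ)/15) * x ^ 12 + ((165035136:ℝ)/13) * x ^ 13 + ((-2621696:ℝ)/3) * x ^ 14 + ((194432:ℝ)/5) * x ^ 15 + ((-1008:ℝ)/1) * x ^ 16 + ((2944:ℝ)/255) * x ^ 17)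
      (2/3*x^10*((14 - 2*x))^6 - x^8*((14 - 2*x))^8 + 2/5*x^6*((14 - 2*x))^10) x := by
    intro x _
    refine ((((((((((((hasDerivAt_pow 7 x).const_mul ((82644187136:ℝ)/5)).add ((hasDerivAt_pow 8 x).const_mul ((-20661046784:ℝ)/1))).add ((hasDerivAt_pow 9 x).const_mul ((104781022976:ℝ)/9))).add ((hasDerivAt_pow 10 x).const_mul ((-19396084736:ℝ)/5))).add ((hasDerivAt_pow 11 x).const_mul ((27844224128:ℝ)/33))).add ((hasDerivAt_pow 12 x).const_mul ((-1872703168:ℝ)/15))).add ((hasDerivAt_pow 13 x).const_mul ((165035136:ℝ)/13))).add ((hasDerivAt_pow 14 x).const_mul ((-2621696:ℝ)/3))).add ((hasDerivAt_pow 15 x).const_mul ((194432:ℝ)/5))).add ((hasDerivAt_pow 16 x).const_mul ((-1008:ℝ)/1))).add ((hasDerivAt_pow 17 x).const_mul ((2944:ℝ)/255))).congr_deriv ?_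
    norm_num; ring
  rw [intervalIntegral.integral_eq_sub_of_hasDerivAt hW ((by fun_prop : Continuous fun x : ℝ => 2/3*x^10*((14 - 2*x))^6 - x^8*((14 - 2*x))^8 + 2/5*x^6*((14 - 2*x))^10).intervalIntegrable _ _)]
  norm_num

lemma piece2a : (∫ x in (0:ℝ)..((9:ℝ)/2), 4/7*x^9*(x)^7 - 8/9*x^7*(x)^9 + 4/11*x^5*(x)^11) = ((1853020188851841:ℝ)/5361664) := by
  have hW : ∀ x ∈ Set.uIcc (0:ℝ) ((9:ℝ)/2), HasDerivAt (fun x : ℝ => ((32:ℝ)/11781) * x ^ 17)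
      (4/7*x^9*(x)^7 - 8/9*x^7*(x)^9 + 4/11*x^5*(x)^11) x := by
    intro x _
    refine ((hasDerivAt_pow 17 x).const_mul ((32:ℝ)/11781)).congr_deriv ?_
    norm_num; ring
  rw [intervalIntegral.integral_eq_sub_of_hasDerivAt hW ((by fun_prop : Continuous fun x : ℝ => 4/7*x^9*(x)^7 - 8/9*x^7*(x)^9 + 4/11*x^5*(x)^11).intervalIntegrable _ _)]
  norm_num

lemma piece2b : (∫ x in ((9:ℝ)/2)..(5:ℝ), 4/7*x^9*((9 - x))^7 - 8/9*x^7*((9 - x))^9 + 4/11*x^5*((9 - x))^11) = ((460203718800404923:ℝ)/313657344) := by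
  have hW : ∀ x ∈ Set.uIcc ((9:ℝ)/2) (5:ℝ), HasDerivAt (fun x : ℝ => ((20920706406:ℝ)/11) * x ^ 6 + ((-13947137604:ℝ)/7) * x ^ 7 + ((1851009003:ℝ)/2) * x ^ 8 + ((-248714388:ℝ)/1) * x ^ 9 + ((296544078:ℝ)/7) * x ^ 10 + ((-51726924:ℝ)/11) * x ^ 11 + ((334611:ℝ)/1) * x ^ 12 + ((-183708:ℝ)/13) * x ^ 13 + ((1944:ℝ)/7) * x ^ 14 + ((-32:ℝ)/11781) * x ^ 17)
      (4/7*x^9*((9 - x))^7 - 8/9*x^7*((9 - x))^9 + 4/11*x^5*((9 - x))^11) x := by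
    intro x _
    refine (((((((((((hasDerivAt_pow 6 x).const_mul ((20920706406:ℝ)/11)).add ((hasDerivAt_pow 7 x).const_mul ((-13947137604:ℝ)/7))).add ((hasDerivAt_pow 8 x).const_mul ((1851009003:ℝ)/2))).add ((hasDerivAt_pow 9 x).const_mul ((-248714388:ℝ)/1))).add ((hasDerivAt_pow 10 x).const_mul ((296544078:ℝ)/7))).add ((hasDerivAt_pow 11 x).const_mul ((-51726924:ℝ)/11))).add ((hasDerivAt_pow 12 x).const_mul ((334611:ℝ)/1))).add ((hasDerivAt_pow 13 x).const_mul ((-183708:ℝ)/13))).add ((hasDerivAt_pow 14 x).const_mul ((1944:ℝ)/7))).add ((hasDerivAt_pow 17 x).const_mul ((-32:ℝ)/11781))).congr_deriv ?_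
    norm_num; ring
  rw [intervalIntegral.integral_eq_sub_of_hasDerivAt hW ((by fun_prop : Continuous fun x : ℝ => 4/7*x^9*((9 - x))^7 - 8/9*x^7*((9 - x))^9 + 4/11*x^5*((9 - x))^11).intervalIntegrable _ _)]
  norm_num

lemma piece2c : (∫ x in (5:ℝ)..(6:ℝ), 4/7*x^9*((14 - 2*x))^7 - 8/9*x^7*((14 - 2*x))^9 + 4/11*x^5*((14 - 2*x))^11) = ((2465464841717536:ℝ)/765765) := by
  have hW : ∀ x ∈ Set.uIcc (5:ℝ) (6:ℝ), HasDerivAt (fun x : ℝ => ((8099130339328:ℝ)/33) * x ^ 6 + ((-330576748544:ℝ)/1) * x ^ 7 + ((1838833163776:ℝ)/9) * x ^ 8 + ((-684766121984:ℝ)/9) * x ^ 9 + ((94480617728:ℝ)/5) * x ^ 10 + ((-108124136960:ℝ)/33) * x ^ 11 + ((1211179648:ℝ)/3) * x ^ 12 + ((-458533376:ℝ)/13) * x ^ 13 + ((6409984:ℝ)/3) * x ^ 14 + ((-426496:ℝ)/5) * x ^ 15 + ((2016:ℝ)/1) * x ^ 16 + ((-251392:ℝ)/11781) * x ^ 17)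
      (4/7*x^9*((14 - 2*x))^7 - 8/9*x^7*((14 - 2*x))^9 + 4/11*x^5*((14 - 2*x))^11) x := by
    intro x _
    refine (((((((((((((hasDerivAt_pow 6 x).const_mul ((8099130339328:ℝ)/33)).add ((hasDerivAt_pow 7 x).const_mul ((-330576748544:ℝ)/1))).add ((hasDerivAt_pow 8 x).const_mul ((1838833163776:ℝ)/9))).add ((hasDerivAt_pow 9 x).const_mul ((-684766121984:ℝ)/9))).add ((hasDerivAt_pow 10 x).const_mul ((94480617728:ℝ)/5))).add ((hasDerivAt_pow 11 x).const_mul ((-108124136960:ℝ)/33))).add ((hasDerivAt_pow 12 x).const_mul ((1211179648:ℝ)/3))).add ((hasDerivAt_pow 13 x).const_mul ((-458533376:ℝ)/13))).add ((hasDerivAt_pow 14 x).const_mul ((6409984:ℝ)/3))).add ((hasDerivAt_pow 15 x).const_mul ((-426496:ℝ)/5))).add ((hasDerivAt_pow 16 x).const_mul ((2016:ℝ)/1))).add ((hasDerivAt_pow 17 x).const_mul ((-251392:ℝ)/11781))).congr_deriv ?_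
    norm_num; ring
  rw [intervalIntegral.integral_eq_sub_of_hasDerivAt hW ((by fun_prop : Continuous fun x : ℝ => 4/7*x^9*((14 - 2*x))^7 - 8/9*x^7*((14 - 2*x))^9 + 4/11*x^5*((14 - 2*x))^11).intervalIntegrable _ _)]
  norm_num

lemma calc0 : (∫ p in Sset, (fun p : ℝ × ℝ => 4*p.1^5*p.2^5*(p.1+p.2)^2*(p.1-p.2)^2) p) = ((517016946285953:ℝ)/288288) := by
  rw [key (fun p : ℝ × ℝ => 4*p.1^5*p.2^5*(p.1+p.2)^2*(p.1-p.2)^2) (by fun_prop)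
    (fun x : ℝ => 2/3*x^9*(gfun x)^6 - x^7*(gfun x)^8 + 2/5*x^5*(gfun x)^10) (by fun_prop)
    (fun x => inner0 x (gfun x))]
  have ea : (∫ x in (0:ℝ)..((9:ℝ)/2), 2/3*x^9*(gfun x)^6 - x^7*(gfun x)^8 + 2/5*x^5*(gfun x)^10) = ((617673396283947:ℝ)/5242880) := by
    rw [← piece0a]
    apply intervalIntegral.integral_congr
    intro x hx
    rw [Set.uIcc_of_le (by norm_num)] at hx
    simp only [gfun_eq1 hx.2]
  have eb : (∫ x in ((9:ℝ)/2)..(5:ℝ), 2/3*x^9*(gfun x)^6 - x^7*(gfun x)^8 + 2/5*x^5*(gfun x)^10) = ((7212807339381430679:ℝ)/15744368640) := by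
    rw [← piece0b]
    apply intervalIntegral.integral_congr
    intro x hx
    rw [Set.uIcc_of_le (by norm_num)] at hx
    simp only [gfun_eq2 hx.1 hx.2]
  have ec : (∫ x in (5:ℝ)..(6:ℝ), 2/3*x^9*(gfun x)^6 - x^7*(gfun x)^8 + 2/5*x^5*(gfun x)^10) = ((1566887306056:ℝ)/1287) := by
    rw [← piece0c]
    apply intervalIntegral.integral_congr
    intro x hx
    rw [Set.uIcc_of_le (by norm_num)] at hx
    simp only [gfun_eq3 hx.1]
  rw [ea, eb, ec]
  norm_num

lemma calc1 : (∫ p in Sset, (fun p : ℝ × ℝ => p.1 * (4*p.1^5*p.2^5*(p.1+p.2)^2*(p.1-p.2)^2)) p) = ((5817870364882097045:ℝ)/627314688) := by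
  rw [key (fun p : ℝ × ℝ => p.1 * (4*p.1^5*p.2^5*(p.1+p.2)^2*(p.1-p.2)^2)) (by fun_prop)
    (fun x : ℝ => 2/3*x^10*(gfun x)^6 - x^8*(gfun x)^8 + 2/5*x^6*(gfun x)^10) (by fun_prop)
    (fun x => inner1 x (gfun x))]
  have ea : (∫ x in (0:ℝ)..((9:ℝ)/2), 2/3*x^10*(gfun x)^6 - x^8*(gfun x)^8 + 2/5*x^6*(gfun x)^10) = ((5559060566555523:ℝ)/11141120) := by
    rw [← piece1a]
    apply intervalIntegral.integral_congr
    intro x hx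
    rw [Set.uIcc_of_le (by norm_num)] at hx
    simp only [gfun_eq1 hx.2]
  have eb : (∫ x in ((9:ℝ)/2)..(5:ℝ), 2/3*x^10*(gfun x)^6 - x^8*(gfun x)^8 + 2/5*x^6*(gfun x)^10) = ((73585761407187974831:ℝ)/33456783360) := by
    rw [← piece1b]
    apply intervalIntegral.integral_congr
    intro x hx
    rw [Set.uIcc_of_le (by norm_num)] at hx
    simp only [gfun_eq2 hx.1 hx.2]
  have ec : (∫ x in (5:ℝ)..(6:ℝ), 2/3*x^10*(gfun x)^6 - x^8*(gfun x)^8 + 2/5*x^6*(gfun x)^10) = ((143873028894800:ℝ)/21879) := by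
    rw [← piece1c]
    apply intervalIntegral.integral_congr
    intro x hx
    rw [Set.uIcc_of_le (by norm_num)] at hx
    simp only [gfun_eq3 hx.1]
  rw [ea, eb, ec]
  norm_num

lemma calc2 : (∫ p in Sset, (fun p : ℝ × ℝ => p.2 * (4*p.1^5*p.2^5*(p.1+p.2)^2*(p.1-p.2)^2)) p) = ((1434963453650673061:ℝ)/285143040) := by
  rw [key (fun p : ℝ × ℝ => p.2 * (4*p.1^5*p.2^5*(p.1+p.2)^2*(p.1-p.2)^2)) (by fun_prop)
    (fun x : ℝ => 4/7*x^9*(gfun x)^7 - 8/9*x^7*(gfun x)^9 + 4/11*x^5*(gfun x)^11) (by fun_prop)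
    (fun x => inner2 x (gfun x))]
  have ea : (∫ x in (0:ℝ)..((9:ℝ)/2), 4/7*x^9*(gfun x)^7 - 8/9*x^7*(gfun x)^9 + 4/11*x^5*(gfun x)^11) = ((1853020188851841:ℝ)/5361664) := by
    rw [← piece2a]
    apply intervalIntegral.integral_congr
    intro x hx
    rw [Set.uIcc_of_le (by norm_num)] at hx
    simp only [gfun_eq1 hx.2]
  have eb : (∫ x in ((9:ℝ)/2)..(5:ℝ), 4/7*x^9*(gfun x)^7 - 8/9*x^7*(gfun x)^9 + 4/11*x^5*(gfun x)^11) = ((460203718800404923:ℝ)/313657344) := by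
    rw [← piece2b]
    apply intervalIntegral.integral_congr
    intro x hx
    rw [Set.uIcc_of_le (by norm_num)] at hx
    simp only [gfun_eq2 hx.1 hx.2]
  have ec : (∫ x in (5:ℝ)..(6:ℝ), 4/7*x^9*(gfun x)^7 - 8/9*x^7*(gfun x)^9 + 4/11*x^5*(gfun x)^11) = ((2465464841717536:ℝ)/765765) := by
    rw [← piece2c]
    apply intervalIntegral.integral_congr
    intro x hx
    rw [Set.uIcc_of_le (by norm_num)] at hx
    simp only [gfun_eq3 hx.1]
  rw [ea, eb, ec]
  norm_num

lemma combo3 {s : Set (ℝ×ℝ)} {v₁ v₂ v₃ p : ℝ×ℝ} (h1 : v₁ ∈ s) (h2 : v₂ ∈ s) (h3 : v₃ ∈ s)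
    {a b c : ℝ} (ha : 0 ≤ a) (hb : 0 ≤ b) (hc : 0 ≤ c) (habc : a + b + c = 1)
    (hp : p = a • v₁ + b • v₂ + c • v₃) : p ∈ convexHull ℝ s := by
  rw [hp]
  have := (convex_convexHull ℝ s).sum_mem (t := Finset.univ) (w := ![a,b,c]) (z := ![v₁,v₂,v₃])
    (fun i _ => by fin_cases i <;> assumption)
    (by simp [Fin.sum_univ_three, habc])
    (fun i _ => by fin_cases i <;> exact subset_convexHull ℝ s ‹_›)
  simpa [Fin.sum_univ_three] using this

lemma hull_eq : convexHull ℝ {((0 : ℝ), (0 : ℝ)), (6, 0), (6, 2), (5, 4), (9 / 2, 9 / 2)} = Sset := by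
  apply Set.Subset.antisymm
  · apply convexHull_min
    · intro p hp
      simp only [Set.mem_insert_iff, Set.mem_singleton_iff] at hp
      rcases hp with rfl|rfl|rfl|rfl|rfl <;> norm_num [Sset]
    · rintro p hp q hq a b ha hb hab
      obtain ⟨hp1, hp2, hp3, hp4, hp5⟩ := hp
      obtain ⟨hq1, hq2, hq3, hq4, hq5⟩ := hq
      refine ⟨?_, ?_, ?_, ?_, ?_⟩ <;>
        simp only [Prod.fst_add, Prod.snd_add, Prod.smul_fst, Prod.smul_snd, smul_eq_mul] <;>
        nlinarith [mul_le_mul_of_nonneg_left hp2 ha, mul_le_mul_of_nonneg_left hq2 hb,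
          mul_le_mul_of_nonneg_left hp3 ha, mul_le_mul_of_nonneg_left hq3 hb,
          mul_le_mul_of_nonneg_left hp4 ha, mul_le_mul_of_nonneg_left hq4 hb,
          mul_le_mul_of_nonneg_left hp5 ha, mul_le_mul_of_nonneg_left hq5 hb,
          mul_nonneg ha hp1, mul_nonneg hb hq1]
  · rintro p ⟨h1, h2, h3, h4, h5⟩
    have hx0 : 0 ≤ p.1 := le_trans h1 h2
    rcases le_or_gt (3 * p.2) p.1 with hc1 | hc1
    · refine combo3 (v₁ := ((0:ℝ),(0:ℝ))) (v₂ := (6,0)) (v₃ := (6,2))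
        (by norm_num) (by norm_num) (by norm_num)
        (a := 1 - p.1/6) (b := p.1/6 - p.2/2) (c := p.2/2)
        (by linarith) (by linarith) (by linarith) (by ring) ?_
      apply Prod.ext <;> simp <;> ring
    · rcases le_or_gt (5 * p.2) (4 * p.1) with hc2 | hc2
      · refine combo3 (v₁ := ((0:ℝ),(0:ℝ))) (v₂ := (6,2)) (v₃ := (5,4))
          (by norm_num) (by norm_num) (by norm_num)
          (a := 1 - (2*p.1 + p.2)/14) (b := (4*p.1 - 5*p.2)/14) (c := (3*p.2 - p.1)/7)
          (by linarith) (by linarith) (by linarith) (by ring) ?_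
        apply Prod.ext <;> simp <;> ring
      · refine combo3 (v₁ := ((0:ℝ),(0:ℝ))) (v₂ := (5,4)) (v₃ := (9/2,9/2))
          (by norm_num) (by norm_num) (by norm_num)
          (a := 1 - (p.1 + p.2)/9) (b := p.1 - p.2) (c := (2/9)*(5*p.2 - 4*p.1))
          (by linarith) (by linarith) (by linarith) (by ring) ?_
        apply Prod.ext <;> simp <;> ring

/-- The barycenter of the moment polytope `Δ₆^{Bℓ}` of the blow-up `Bℓ_Z(X₆)` with respect
to the Duistermaat–Heckman measure is
`(5817870364882097045/1125028875118233728, 15784597990157403671/5625144375591168640)`;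
in particular `x̄ + ȳ < 8`. -/
theorem barycenter_Delta6_blowup :
    let Δ : Set (ℝ × ℝ) := convexHull ℝ
      {((0 : ℝ), (0 : ℝ)), (6, 0), (6, 2), (5, 4), (9 / 2, 9 / 2)}
    let P : ℝ × ℝ → ℝ := fun p =>
      4 * p.1 ^ 5 * p.2 ^ 5 * (p.1 + p.2) ^ 2 * (p.1 - p.2) ^ 2
    let xbar : ℝ := (∫ p in Δ, p.1 * P p) / (∫ p in Δ, P p)
    let ybar : ℝ := (∫ p in Δ, p.2 * P p) / (∫ p in Δ, P p)
    xbar = 5817870364882097045 / 1125028875118233728 ∧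
      ybar = 15784597990157403671 / 5625144375591168640 ∧
      xbar + ybar < 8 := by
  intro Δ P xbar ybar
  have hΔ : Δ = Sset := hull_eq
  have h0 : (∫ p in Δ, P p) = ((517016946285953:ℝ)/288288) := by rw [hΔ]; exact calc0
  have h1 : (∫ p in Δ, p.1 * P p) = ((5817870364882097045:ℝ)/627314688) := by rw [hΔ]; exact calc1
  have h2 : (∫ p in Δ, p.2 * P p) = ((1434963453650673061:ℝ)/285143040) := by rw [hΔ]; exact calc2
  refine ⟨?_, ?_, ?_⟩
  · show (∫ p in Δ, p.1 * P p) / (∫ p in Δ, P p) = _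
    rw [h1, h0]; norm_num
  · show (∫ p in Δ, p.2 * P p) / (∫ p in Δ, P p) = _
    rw [h2, h0]; norm_num
  · show (∫ p in Δ, p.1 * P p) / (∫ p in Δ, P p) + (∫ p in Δ, p.2 * P p) / (∫ p in Δ, P p) < 8
    rw [h1, h2, h0]; norm_num
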